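/- Let (η_n) be a sequence in L²(Ω; ℝⁿ) (for a finite measure space Ω) converging weakly to η, and suppose there is a set-valued map F with closed convex values such that, for a.e. ω, every subsequential limit of (η_n(ω)) lies in F(X(ω)) and (η_n(ω)) is bounded. Then η(ω) ∈ F(X(ω)) for a.e. ω. -/

import Mathlib

open MeasureTheory Filter Metric Set Topology

theorem stmt_17 {n : ℕ} {Ω : Type*} [MeasurableSpace Ω] (μ : Measure Ω) [IsFiniteMeasure μ]
    (η : ℕ → Ω → EuclideanSpace ℝ (Fin n)) (ηlim : Ω → EuclideanSpace ℝ (Fin n))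
    (hmem : ∀ k, MemLp (η k) 2 μ) (hmemlim : MemLp ηlim 2 μ)
    (hweak : ∀ g : Ω → EuclideanSpace ℝ (Fin n), MemLp g 2 μ →
      Filter.Tendsto (fun k => ∫ ω, (inner ℝ (η k ω) (g ω) : ℝ) ∂μ) Filter.atTop
        (nhds (∫ ω, (inner ℝ (ηlim ω) (g ω) : ℝ) ∂μ)))
    (F : EuclideanSpace ℝ (Fin n) → Set (EuclideanSpace ℝ (Fin n)))
    (hF : ∀ x, Convex ℝ (F x) ∧ IsClosed (F x) ∧ (F x).Nonempty)
    (X : Ω → EuclideanSpace ℝ (Fin n)) (hX : Measurable X)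
    (hbdd : ∀ᵐ ω ∂μ, ∃ M : ℝ, ∀ k, ‖η k ω‖ ≤ M)
    (hclus : ∀ᵐ ω ∂μ, ∀ y, MapClusterPt y Filter.atTop (fun k => η k ω) → y ∈ F (X ω)) :
    ∀ᵐ ω ∂μ, ηlim ω ∈ F (X ω) := by
  classical
  let E := EuclideanSpace ℝ (Fin n)
  set f : ℕ → Lp E 2 μ := fun k => (hmem k).toLp (η k) with hf
  set flim : Lp E 2 μ := hmemlim.toLp ηlim with hflim
  -- Step 1: flim is in the closure of the convex hull of every tail
  have claimA : ∀ m : ℕ, flim ∈ closure (convexHull ℝ (f '' Set.Ici m)) := by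
    intro m
    by_contra hnot
    have hCconv : Convex ℝ (closure (convexHull ℝ (f '' Set.Ici m))) :=
      (convex_convexHull ℝ _).closure
    obtain ⟨φ, c, hφlim, hφmem⟩ :=
      geometric_hahn_banach_point_closed hCconv isClosed_closure hnot
    set g : Lp E 2 μ := (InnerProductSpace.toDual ℝ (Lp E 2 μ)).symm φ with hg
    have hφeq : ∀ y : Lp E 2 μ, φ y = (inner ℝ g y : ℝ) := by
      intro y
      rw [hg, ← InnerProductSpace.toDual_apply_apply, LinearIsometryEquiv.apply_symm_apply]
    have hgmem : MemLp (g : Ω → E) 2 μ := Lp.memLp g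
    have key : ∀ (h : Ω → E) (hh : MemLp h 2 μ),
        (inner ℝ g (hh.toLp h) : ℝ) = ∫ ω, (inner ℝ (h ω) ((g : Ω → E) ω) : ℝ) ∂μ := by
      intro h hh
      rw [L2.inner_def]
      refine integral_congr_ae ?_
      filter_upwards [hh.coeFn_toLp] with ω hω
      rw [hω, real_inner_comm]
    have hweak' := hweak (g : Ω → E) hgmem
    have h1 : ∀ k, ∫ ω, (inner ℝ (η k ω) ((g : Ω → E) ω) : ℝ) ∂μ = φ (f k) := by
      intro k; rw [hφeq, key]
    have h2 : ∫ ω, (inner ℝ (ηlim ω) ((g : Ω → E) ω) : ℝ) ∂μ = φ flim := by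
      rw [hφeq, key]
    rw [h2] at hweak'
    have hlb : ∀ k ≥ m, c ≤ ∫ ω, (inner ℝ (η k ω) ((g : Ω → E) ω) : ℝ) ∂μ := by
      intro k hk
      rw [h1]
      exact (hφmem (f k) (subset_closure (subset_convexHull ℝ _ ⟨k, hk, rfl⟩))).le
    have : c ≤ φ flim :=
      ge_of_tendsto hweak' (eventually_atTop.2 ⟨m, hlb⟩)
    exact absurd hφlim (not_lt.2 this)
  -- Step 2: choose convex combinations converging in L2
  have claimB : ∀ m : ℕ, ∃ z : Lp E 2 μ, z ∈ convexHull ℝ (f '' Set.Ici m) ∧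
      dist flim z < 1 / (m + 1) := by
    intro m
    exact Metric.mem_closure_iff.1 (claimA m) _ (by positivity)
  choose z hzmem hzdist using claimB
  have hztendsto : Tendsto z atTop (𝓝 flim) := by
    rw [tendsto_iff_dist_tendsto_zero]
    refine squeeze_zero (g := fun m : ℕ => 1 / (m + 1)) (fun m => dist_nonneg)
      (fun m => ?_) tendsto_one_div_add_atTop_nhds_zero_nat
    rw [dist_comm]
    exact (hzdist m).le
  obtain ⟨ns, hns, hae⟩ :=
    (tendstoInMeasure_of_tendsto_Lp hztendsto).exists_seq_tendsto_ae
  -- Step 3: pointwise membership of the convex combinations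
  have claimC : ∀ m : ℕ, ∀ᵐ ω ∂μ,
      (z m : Ω → E) ω ∈ closure (convexHull ℝ ((fun k => η k ω) '' Set.Ici m)) := by
    intro m
    set S : Set (Lp E 2 μ) := {h | ∀ᵐ ω ∂μ,
      (h : Ω → E) ω ∈ closure (convexHull ℝ ((fun k => η k ω) '' Set.Ici m))} with hS
    have hSconv : Convex ℝ S := by
      intro x hx y hy a b ha hb hab
      filter_upwards [hx, hy, Lp.coeFn_add (a • x) (b • y), Lp.coeFn_smul a x,
        Lp.coeFn_smul b y] with ω h1 h2 h3 h4 h5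
      rw [h3]
      simp only [Pi.add_apply]
      rw [h4, h5]
      exact (convex_convexHull ℝ _).closure h1 h2 ha hb hab
    have hsub : f '' Set.Ici m ⊆ S := by
      rintro _ ⟨k, hk, rfl⟩
      filter_upwards [(hmem k).coeFn_toLp] with ω hω
      rw [hω]
      exact subset_closure (subset_convexHull ℝ _ ⟨k, hk, rfl⟩)
    exact convexHull_min hsub hSconv (hzmem m)
  -- Step 4: a.e. pointwise: tails eventually in cthickenings of F (X ω)
  have hthick : ∀ᵐ ω ∂μ, ∀ ε : ℝ, 0 < ε → ∃ m, ∀ k ≥ m,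
      η k ω ∈ cthickening ε (F (X ω)) := by
    filter_upwards [hbdd, hclus] with ω ⟨M, hM⟩ hcl
    intro ε hε
    by_contra hno
    push_neg at hno
    have hfreq : ∃ᶠ k in atTop, η k ω ∉ cthickening ε (F (X ω)) := by
      rw [frequently_atTop]
      intro m
      obtain ⟨k, hk, hk2⟩ := hno m
      exact ⟨k, hk, hk2⟩
    obtain ⟨φ, hφmono, hφ⟩ := Filter.extraction_of_frequently_atTop hfreq
    have hball : ∀ j, η (φ j) ω ∈ Metric.closedBall (0 : E) M := by
      intro j; simpa [Metric.mem_closedBall] using hM (φ j)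
    obtain ⟨a, _, ψ, hψmono, hψtend⟩ :=
      tendsto_subseq_of_bounded Metric.isBounded_closedBall hball
    have haF : a ∈ F (X ω) := by
      refine hcl a (MapClusterPt.of_comp (u := fun k => η k ω)
        (φ := fun j => φ (ψ j)) ?_ (Filter.Tendsto.mapClusterPt hψtend))
      exact (hφmono.comp hψmono).tendsto_atTop
    have hev : ∀ᶠ j in atTop, η (φ (ψ j)) ω ∈ cthickening ε (F (X ω)) := by
      filter_upwards [hψtend (Metric.ball_mem_nhds a hε)] with j hj
      exact Metric.thickening_subset_cthickening ε _
        (Metric.mem_thickening_iff.2 ⟨a, haF, by simpa [dist_comm] using hj⟩)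
    obtain ⟨j, hj⟩ := hev.exists
    exact hφ (ψ j) hj
  -- Step 5: combine
  filter_upwards [hthick, hae, hmemlim.coeFn_toLp, ae_all_iff.2 claimC] with ω hth htend hωlim hmem'
  rw [hωlim] at htend
  have hmain : ∀ ε : ℝ, 0 < ε → ηlim ω ∈ cthickening ε (F (X ω)) := by
    intro ε hε
    obtain ⟨m0, hm0⟩ := hth ε hε
    have hclosed : IsClosed (cthickening ε (F (X ω))) := isClosed_cthickening
    have hconv : Convex ℝ (cthickening ε (F (X ω))) := (hF (X ω)).1.cthickening ε
    refine hclosed.mem_of_tendsto htend ?_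
    have hns : Tendsto ns atTop atTop := hns.tendsto_atTop
    filter_upwards [hns.eventually_ge_atTop m0] with j hj
    have hmem2 := hmem' (ns j)
    refine closure_minimal (convexHull_min ?_ hconv) hclosed hmem2
    rintro _ ⟨k, hk, rfl⟩
    exact hm0 k (le_trans hj hk)
  have : ηlim ω ∈ closure (F (X ω)) := by
    rw [Metric.closure_eq_iInter_cthickening]
    simp only [Set.mem_iInter]
    intro δ hδ
    exact hmain δ hδ
  rwa [(hF (X ω)).2.1.closure_eq] at this
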